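/- Let n ≥ 2 and let I_1, ..., I_n be i.i.d. random variables with the equal revenue distribution. Then for any P ≥ 6 log n, P[(1/n) · Σ_{i=1}^n I_i ≥ P] ≤ 9/P. -/

import Mathlib

open MeasureTheory


open MeasureTheory in
/-- Auxiliary layer-cake bound: for a bounded nonnegative random variable,
`E[f] ≤ 1 + ∫_(1,M] bound` whenever the tail probabilities on `(1, M]` are
bounded by `bound`. -/
lemma er_layer_aux {Ω : Type*} [MeasurableSpace Ω] (μ : Measure Ω)
    [IsProbabilityMeasure μ] (f : Ω → ℝ) (M : ℝ) (hM : 1 ≤ M)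
    (hnn : ∀ᵐ ω ∂μ, 0 ≤ f ω) (hbd : ∀ᵐ ω ∂μ, f ω ≤ M) (hint : Integrable f μ)
    (bound : ℝ → ℝ) (hbound_int : IntegrableOn bound (Set.Ioc 1 M))
    (hbound : ∀ t ∈ Set.Ioc (1:ℝ) M, (μ {a | t ≤ f a}).toReal ≤ bound t) :
    ∫ ω, f ω ∂μ ≤ 1 + ∫ t in Set.Ioc (1:ℝ) M, bound t := by
  rw [hint.integral_eq_integral_Ioc_meas_le hnn hbd]
  set g : ℝ → ℝ := fun t => (μ {a | t ≤ f a}).toReal with hg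
  have hg_meas : Measurable g := by
    have hanti : Antitone g := fun s t hst =>
      ENNReal.toReal_mono (measure_ne_top μ _)
        (measure_mono (fun a ha => le_trans hst ha))
    exact hanti.measurable
  have hg_le_one : ∀ t, g t ≤ 1 := fun t =>
    ENNReal.toReal_mono (by norm_num) (prob_le_one)
  have hg_nn : ∀ t, 0 ≤ g t := fun t => ENNReal.toReal_nonneg
  have hg_int : ∀ a b : ℝ, IntegrableOn g (Set.Ioc a b) := by
    intro a b
    refine Integrable.mono' ((integrableOn_const_iff (C := (1:ℝ))).mpr
      (Or.inr measure_Ioc_lt_top)) hg_meas.aestronglyMeasurable ?_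
    refine Filter.Eventually.of_forall (fun t => ?_)
    rw [Real.norm_eq_abs, abs_of_nonneg (hg_nn t)]
    exact hg_le_one t
  have hsplit : Set.Ioc (0:ℝ) M = Set.Ioc 0 1 ∪ Set.Ioc 1 M :=
    (Set.Ioc_union_Ioc_eq_Ioc (by norm_num) hM).symm
  change ∫ t in Set.Ioc (0:ℝ) M, g t ≤ _
  rw [hsplit, setIntegral_union (Set.Ioc_disjoint_Ioc_of_le le_rfl) measurableSet_Ioc
    (hg_int 0 1) (hg_int 1 M)]
  have h1 : ∫ t in Set.Ioc (0:ℝ) 1, g t ≤ 1 := by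
    have : ∫ t in Set.Ioc (0:ℝ) 1, g t ≤ ∫ _t in Set.Ioc (0:ℝ) 1, (1:ℝ) := by
      refine setIntegral_mono_on (hg_int 0 1)
        ((integrableOn_const_iff (C := (1:ℝ))).mpr (Or.inr measure_Ioc_lt_top))
        measurableSet_Ioc ?_
      exact fun t _ => hg_le_one t
    simpa using this
  have h2 : ∫ t in Set.Ioc (1:ℝ) M, g t ≤ ∫ t in Set.Ioc (1:ℝ) M, bound t :=
    setIntegral_mono_on (hg_int 1 M) hbound_int measurableSet_Ioc hbound
  linarith

set_option maxHeartbeats 1000000 in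
/-- Lemma 1 (second part): for `n ≥ 2` i.i.d. equal-revenue random variables `I_1, …, I_n`
and any `P ≥ 6 log n`, `P[(1/n) Σ I_i ≥ P] ≤ 9/P`. -/
theorem er_average_upper_tail
    {Ω : Type*} [MeasurableSpace Ω] (μ : Measure Ω) [IsProbabilityMeasure μ]
    (n : ℕ) (hn : 2 ≤ n) (I : Fin n → Ω → ℝ)
    (hmeas : ∀ i, Measurable (I i))
    (hindep : ProbabilityTheory.iIndepFun I μ)
    (hsupp : ∀ i, ∀ᵐ ω ∂μ, 1 ≤ I i ω)
    (hcdf : ∀ i, ∀ x : ℝ, 1 ≤ x → (μ {ω | I i ω ≤ x}).toReal = 1 - 1 / x)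
    (P : ℝ) (hP : 6 * Real.log n ≤ P) :
    (μ {ω | P ≤ (1 / (n : ℝ)) * ∑ i, I i ω}).toReal ≤ 9 / P := by
  have hn1 : (1 : ℝ) ≤ (n : ℝ) := by exact_mod_cast Nat.one_le_of_lt hn
  have hn2 : (2 : ℝ) ≤ (n : ℝ) := by exact_mod_cast hn
  have hnpos : (0 : ℝ) < n := by linarith
  have hP0 : 0 < P := by
    have h2 : (0:ℝ) < Real.log 2 := Real.log_pos (by norm_num)
    have : Real.log 2 ≤ Real.log n := Real.log_le_log (by norm_num) hn2
    nlinarith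
  -- trivial case
  by_cases hP9 : P ≤ 9
  · have h1 : (μ {ω | P ≤ (1 / (n : ℝ)) * ∑ i, I i ω}).toReal ≤ 1 := by
      have := prob_le_one (μ := μ) (s := {ω | P ≤ (1 / (n : ℝ)) * ∑ i, I i ω})
      simpa using ENNReal.toReal_mono (by norm_num) this
    have : (1:ℝ) ≤ 9 / P := (one_le_div hP0).mpr hP9
    linarith
  push_neg at hP9
  set T : ℝ := n * P / 2 with hTdef
  have hT9 : 9 ≤ T := by rw [hTdef]; nlinarith
  have hT1 : 1 ≤ T := by linarith
  have hT0 : 0 < T := by linarith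
  -- exact tail formula for strict inequality
  have htail_lt : ∀ i, ∀ x : ℝ, 1 ≤ x → (μ {ω | x < I i ω}).toReal = 1 / x := by
    intro i x hx
    have hms : MeasurableSet {ω | I i ω ≤ x} := (hmeas i) measurableSet_Iic
    have hcompl : {ω | x < I i ω} = {ω | I i ω ≤ x}ᶜ := by
      ext ω; simp [not_le]
    rw [hcompl, measure_compl hms (measure_ne_top μ _), measure_univ,
      ENNReal.toReal_sub_of_le (prob_le_one) (by norm_num), ENNReal.toReal_one,
      hcdf i x hx]
    ring
  -- tail bound for non-strict inequality
  have htail_le : ∀ i, ∀ x : ℝ, 1 ≤ x → (μ {ω | x ≤ I i ω}).toReal ≤ 1 / x := by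
    intro i x hx
    rcases eq_or_lt_of_le hx with rfl | h1
    · have h : (μ {ω | (1:ℝ) ≤ I i ω}).toReal ≤ 1 :=
        ENNReal.toReal_mono (by norm_num) (prob_le_one)
      simpa using h
    · have key : ∀ s : ℝ, s ∈ Set.Ioo 1 x → (μ {ω | x ≤ I i ω}).toReal ≤ 1 / s := by
        intro s hs
        rw [← htail_lt i s hs.1.le]
        exact ENNReal.toReal_mono (measure_ne_top μ _)
          (measure_mono (fun ω hω => lt_of_lt_of_le hs.2 hω))
      have htend : Filter.Tendsto (fun s : ℝ => 1 / s) (nhdsWithin x (Set.Iio x))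
          (nhds (1 / x)) := by
        apply Filter.Tendsto.mono_left _ nhdsWithin_le_nhds
        exact tendsto_const_nhds.div Filter.tendsto_id (by intro h; rw [h] at h1; linarith)
      exact ge_of_tendsto htend (Filter.eventually_of_mem
        (Ioo_mem_nhdsLT_of_mem ⟨h1, le_refl x⟩) key)
  -- truncated variables
  set J : Fin n → Ω → ℝ := fun i ω => min (I i ω) T with hJdef
  have hJmeas : ∀ i, Measurable (J i) := fun i => (hmeas i).min measurable_const
  have hJ_bd : ∀ i, ∀ᵐ ω ∂μ, ‖J i ω‖ ≤ T := by
    intro i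
    filter_upwards [hsupp i] with ω hω
    rw [Real.norm_eq_abs, abs_le]
    constructor
    · have : (1:ℝ) ≤ J i ω := le_min hω hT1
      linarith
    · exact min_le_right _ _
  have hJ_nn : ∀ i, ∀ᵐ ω ∂μ, 0 ≤ J i ω := by
    intro i
    filter_upwards [hsupp i] with ω hω
    exact le_trans (by norm_num) (le_min hω hT1)
  have hJ_int : ∀ i, Integrable (J i) μ := by
    intro i
    exact Integrable.mono' (integrable_const T) (hJmeas i).aestronglyMeasurable (hJ_bd i)
  have hJ_mem2 : ∀ i, MemLp (J i) 2 μ :=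
    fun i => MemLp.of_bound (hJmeas i).aestronglyMeasurable T (hJ_bd i)
  -- first moment bound
  have hEJ : ∀ i, ∫ ω, J i ω ∂μ ≤ 1 + Real.log T := by
    intro i
    have hcont : ContinuousOn (fun t : ℝ => 1 / t) (Set.Icc 1 T) := by
      refine continuousOn_const.div continuousOn_id (fun x hx => ?_)
      have := hx.1; intro h; rw [h] at this; linarith
    have hb_int : IntegrableOn (fun t : ℝ => 1 / t) (Set.Ioc 1 T) :=
      (hcont.integrableOn_Icc).mono_set Set.Ioc_subset_Icc_self
    have hb : ∀ t ∈ Set.Ioc (1:ℝ) T, (μ {a | t ≤ J i a}).toReal ≤ 1 / t := by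
      intro t ht
      have hsub : {a | t ≤ J i a} ⊆ {a | t ≤ I i a} := fun a ha =>
        show t ≤ I i a from le_trans (show t ≤ J i a from ha) (min_le_left _ _)
      refine le_trans (ENNReal.toReal_mono (measure_ne_top μ _)
        (measure_mono hsub)) ?_
      exact htail_le i t ht.1.le
    have hval : ∫ t in Set.Ioc (1:ℝ) T, 1 / t = Real.log T := by
      rw [← intervalIntegral.integral_of_le hT1, integral_one_div (by
        intro h
        rcases Set.mem_uIcc.mp h with ⟨h1, _⟩ | ⟨_, h2⟩ <;> linarith), div_one]
    have := er_layer_aux μ (J i) T hT1 (hJ_nn i)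
      (Filter.Eventually.of_forall (fun ω => min_le_right _ _)) (hJ_int i)
      (fun t => 1 / t) hb_int hb
    rwa [hval] at this
  -- second moment bound
  have hEJ2 : ∀ i, ∫ ω, (J i ω) ^ 2 ∂μ ≤ 2 * T := by
    intro i
    have hM12 : (1:ℝ) ≤ T ^ 2 := by nlinarith
    have hbd2 : ∀ᵐ ω ∂μ, (J i ω) ^ 2 ≤ T ^ 2 := by
      filter_upwards [hJ_bd i] with ω hω
      rw [Real.norm_eq_abs, abs_le] at hω
      exact sq_le_sq' hω.1 hω.2
    have hint2 : Integrable (fun ω => (J i ω) ^ 2) μ := by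
      refine Integrable.mono' (integrable_const (T ^ 2))
        ((hJmeas i).pow_const 2).aestronglyMeasurable ?_
      filter_upwards [hbd2] with ω hω
      rw [Real.norm_eq_abs, abs_of_nonneg (sq_nonneg _)]
      exact hω
    have hcont : ContinuousOn (fun t : ℝ => t ^ (-(1/2) : ℝ)) (Set.Icc 1 (T ^ 2)) := by
      intro x hx
      refine (Real.continuousAt_rpow_const x _ (Or.inl ?_)).continuousWithinAt
      have := hx.1; intro h; rw [h] at this; linarith
    have hb_int : IntegrableOn (fun t : ℝ => t ^ (-(1/2) : ℝ)) (Set.Ioc 1 (T ^ 2)) :=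
      (hcont.integrableOn_Icc).mono_set Set.Ioc_subset_Icc_self
    have hb : ∀ t ∈ Set.Ioc (1:ℝ) (T ^ 2),
        (μ {a | t ≤ (J i a) ^ 2}).toReal ≤ t ^ (-(1/2) : ℝ) := by
      intro t ht
      have ht1 : (1:ℝ) ≤ t := ht.1.le
      have ht0 : (0:ℝ) < t := by linarith
      have hsqrt1 : (1:ℝ) ≤ Real.sqrt t := by
        rw [show (1:ℝ) = Real.sqrt 1 from (Real.sqrt_one).symm]
        exact Real.sqrt_le_sqrt ht1
      have hae : {a | t ≤ (J i a) ^ 2} ≤ᵐ[μ] {a | Real.sqrt t ≤ I i a} := by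
        filter_upwards [hsupp i] with ω hω hmem
        have h0 : 0 ≤ J i ω := le_trans zero_le_one (le_min hω hT1)
        have hs : Real.sqrt t ≤ J i ω := by
          have h := Real.sqrt_le_sqrt hmem
          rwa [Real.sqrt_sq h0] at h
        exact le_trans hs (min_le_left _ _)
      have hmle : (μ {a | t ≤ (J i a) ^ 2}).toReal ≤
          (μ {a | Real.sqrt t ≤ I i a}).toReal :=
        ENNReal.toReal_mono (measure_ne_top μ _) (measure_mono_ae hae)
      refine le_trans hmle (le_trans (htail_le i _ hsqrt1) ?_)
      rw [Real.rpow_neg ht0.le, ← Real.sqrt_eq_rpow, one_div]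
    have hval : ∫ t in Set.Ioc (1:ℝ) (T ^ 2), t ^ (-(1/2) : ℝ) = 2 * T - 2 := by
      rw [← intervalIntegral.integral_of_le hM12,
        integral_rpow (Or.inr ⟨by norm_num, by
          intro h
          rcases Set.mem_uIcc.mp h with ⟨h1, _⟩ | ⟨_, h2⟩ <;> nlinarith⟩)]
      rw [show (-(1/2) : ℝ) + 1 = 1/2 by norm_num, Real.one_rpow,
        show ((T ^ 2 : ℝ) ^ ((1:ℝ)/2)) = T by
          rw [← Real.sqrt_eq_rpow, Real.sqrt_sq hT0.le]]
      ring
    have := er_layer_aux μ (fun ω => (J i ω) ^ 2) (T ^ 2) hM12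
      (Filter.Eventually.of_forall (fun ω => sq_nonneg _)) hbd2 hint2
      (fun t => t ^ (-(1/2) : ℝ)) hb_int hb
    rw [hval] at this
    linarith
  -- the sum
  set X : Ω → ℝ := ∑ i, J i with hXdef
  have hXapp : ∀ ω, X ω = ∑ i, J i ω := by
    intro ω; rw [hXdef]; simp [Finset.sum_apply]
  have hXmem2 : MemLp X 2 μ := memLp_finsetSum' _ (fun i _ => hJ_mem2 i)
  -- variance bound
  have hvar : ProbabilityTheory.variance X μ ≤ (n : ℝ) * (2 * T) := by
    have hpair : Set.Pairwise ↑(Finset.univ : Finset (Fin n))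
        (fun i j => ProbabilityTheory.IndepFun (J i) (J j) μ) := by
      intro i _ j _ hij
      exact (hindep.indepFun hij).comp (measurable_id.min measurable_const)
        (measurable_id.min measurable_const)
    rw [hXdef, ProbabilityTheory.IndepFun.variance_sum (fun i _ => hJ_mem2 i) hpair]
    have hstep : ∀ i : Fin n, ProbabilityTheory.variance (J i) μ ≤ 2 * T := by
      intro i
      refine le_trans (ProbabilityTheory.variance_le_expectation_sq
        (hJmeas i).aestronglyMeasurable) ?_
      exact hEJ2 i
    calc ∑ i, ProbabilityTheory.variance (J i) μ ≤ ∑ _i : Fin n, 2 * T :=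
          Finset.sum_le_sum (fun i _ => hstep i)
      _ = (n : ℝ) * (2 * T) := by
          rw [Finset.sum_const, Finset.card_univ, Fintype.card_fin, nsmul_eq_mul]
  -- mean bound
  have hkey : 1 + Real.log T ≤ 3 * P / 5 := by
    have hlogn : Real.log n ≤ P / 6 := by linarith
    have hP2 : (0:ℝ) < P / 2 := by linarith
    have hlogT : Real.log T = Real.log n + Real.log (P / 2) := by
      rw [hTdef, show (n:ℝ) * P / 2 = (n : ℝ) * (P / 2) by ring,
        Real.log_mul (ne_of_gt hnpos) (ne_of_gt hP2)]
    set u : ℝ := Real.sqrt (P / 2) with hudef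
    have husq : u ^ 2 = P / 2 := Real.sq_sqrt hP2.le
    have hu2 : 2 ≤ u := by
      have h4 : Real.sqrt 4 = 2 := by
        rw [show (4:ℝ) = 2 ^ 2 by norm_num, Real.sqrt_sq (by norm_num)]
      have h5 : Real.sqrt 4 ≤ Real.sqrt (P / 2) := Real.sqrt_le_sqrt (by linarith)
      rw [h4] at h5
      exact h5
    have hlog_u : Real.log (P / 2) ≤ 2 * (u - 1) := by
      have h1 : Real.log u ≤ u - 1 :=
        Real.log_le_sub_one_of_pos (by linarith)
      have h2 : Real.log (P / 2) = 2 * Real.log u := by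
        rw [hudef, Real.log_sqrt hP2.le]; ring
      linarith
    nlinarith [sq_nonneg (u - 2)]
  have hEX : ∫ ω, X ω ∂μ ≤ (n : ℝ) * (3 * P / 5) := by
    have hsum : ∫ ω, X ω ∂μ = ∑ i, ∫ ω, J i ω ∂μ := by
      simp_rw [hXapp]
      exact integral_finset_sum _ (fun i _ => hJ_int i)
    rw [hsum]
    calc ∑ i, ∫ ω, J i ω ∂μ ≤ ∑ _i : Fin n, (1 + Real.log T) :=
          Finset.sum_le_sum (fun i _ => hEJ i)
      _ = (n : ℝ) * (1 + Real.log T) := by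
          rw [Finset.sum_const, Finset.card_univ, Fintype.card_fin, nsmul_eq_mul]
      _ ≤ (n : ℝ) * (3 * P / 5) := by
          apply mul_le_mul_of_nonneg_left hkey (by positivity)
  -- Chebyshev
  set c : ℝ := 2 * n * P / 5 with hcdef
  have hc0 : 0 < c := by rw [hcdef]; positivity
  have hcheb : μ {ω | c ≤ |X ω - ∫ a, X a ∂μ|} ≤
      ENNReal.ofReal (ProbabilityTheory.variance X μ / c ^ 2) :=
    ProbabilityTheory.meas_ge_le_variance_div_sq hXmem2 hc0
  -- event inclusion
  have hincl : {ω | P ≤ (1 / (n : ℝ)) * ∑ i, I i ω} ⊆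
      (⋃ i, {ω | T < I i ω}) ∪ {ω | c ≤ |X ω - ∫ a, X a ∂μ|} := by
    intro ω hω
    rw [Set.mem_setOf_eq] at hω
    by_cases hcase : ∀ i, I i ω ≤ T
    · right
      have hXω : X ω = ∑ i, I i ω := by
        rw [hXapp]
        exact Finset.sum_congr rfl (fun i _ => min_eq_left (hcase i))
      have hsum : (n : ℝ) * P ≤ ∑ i, I i ω := by
        have h := mul_le_mul_of_nonneg_left hω hnpos.le
        rw [show (n:ℝ) * (1 / (n:ℝ) * ∑ i, I i ω) = ∑ i, I i ω by
          field_simp] at h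
        exact h
      have hle : c ≤ X ω - ∫ a, X a ∂μ := by
        rw [hcdef]
        have := hEX
        rw [hXω]
        linarith
      exact le_trans hle (le_abs_self _)
    · left
      push_neg at hcase
      obtain ⟨i, hi⟩ := hcase
      exact Set.mem_iUnion.mpr ⟨i, hi⟩
  -- union bound
  have hunion : μ (⋃ i, {ω | T < I i ω}) ≤ ENNReal.ofReal ((n : ℝ) * (1 / T)) := by
    have heach : ∀ i, μ {ω | T < I i ω} = ENNReal.ofReal (1 / T) := by
      intro i
      rw [← htail_lt i T hT1, ENNReal.ofReal_toReal (measure_ne_top μ _)]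
    calc μ (⋃ i, {ω | T < I i ω}) ≤ ∑' i, μ {ω | T < I i ω} := measure_iUnion_le _
      _ = ∑ i, μ {ω | T < I i ω} := tsum_fintype _
      _ = ∑ _i : Fin n, ENNReal.ofReal (1 / T) :=
          Finset.sum_congr rfl (fun i _ => heach i)
      _ = (n : ENNReal) * ENNReal.ofReal (1 / T) := by
          rw [Finset.sum_const, Finset.card_univ, Fintype.card_fin, nsmul_eq_mul]
      _ = ENNReal.ofReal ((n : ℝ) * (1 / T)) := by
          rw [ENNReal.ofReal_mul (by positivity), ENNReal.ofReal_natCast]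
  -- final computation
  have hfinal : μ {ω | P ≤ (1 / (n : ℝ)) * ∑ i, I i ω} ≤
      ENNReal.ofReal ((n : ℝ) * (1 / T)) +
        ENNReal.ofReal (ProbabilityTheory.variance X μ / c ^ 2) :=
    le_trans (measure_mono hincl)
      (le_trans (measure_union_le _ _) (add_le_add hunion hcheb))
  have hvc_nn : 0 ≤ ProbabilityTheory.variance X μ / c ^ 2 :=
    div_nonneg (ProbabilityTheory.variance_nonneg _ _) (sq_nonneg c)
  rw [← ENNReal.ofReal_add (by positivity) hvc_nn] at hfinal
  have h2 := ENNReal.toReal_mono ENNReal.ofReal_ne_top hfinal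
  rw [ENNReal.toReal_ofReal (by positivity)] at h2
  have hA : (n : ℝ) * (1 / T) = 2 / P := by
    rw [hTdef]; field_simp
  have hB : ProbabilityTheory.variance X μ / c ^ 2 ≤ 25 / (4 * P) := by
    have hvar' : ProbabilityTheory.variance X μ ≤ (n : ℝ) ^ 2 * P := by
      rw [hTdef] at hvar
      nlinarith
    have hc2 : (0:ℝ) < c ^ 2 := by positivity
    calc ProbabilityTheory.variance X μ / c ^ 2 ≤ ((n : ℝ) ^ 2 * P) / c ^ 2 :=
          (div_le_div_iff_of_pos_right hc2).mpr hvar'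
      _ = 25 / (4 * P) := by
          rw [hcdef]; field_simp; ring
  have hC : 2 / P + 25 / (4 * P) ≤ 9 / P := by
    have h1 : 2 / P + 25 / (4 * P) = (33 / 4) * (1 / P) := by
      field_simp; ring
    have h2' : 9 / P = 9 * (1 / P) := by ring
    have h3 : (0:ℝ) < 1 / P := by positivity
    rw [h1, h2']
    exact mul_le_mul_of_nonneg_right (by norm_num) h3.le
  rw [hA] at h2
  linarith
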